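/- arXiv:2007.09561 — 3 statements merged into one kernel-verified Lean document; each statement's English description precedes it below -/
import Mathlib

section
/- Suppose σ, l are reals with 0 < σ ≤ 1 ≤ l and positive integers h ≤ m. If A is a nonnegative (n−1)×(n−1) matrix with all row sums at most l^{m−h}, such that for some indices s, s₁ one has A_{s,s₁} ≥ σ^{m−h}, and B is a nonnegative matrix with Λ_j[B] ≤ l^h for all j and Λ_{s₁}[B] ≤ l^h − σ^h, then Λ_s[AB] ≤ l^m − σ^m. -/
/-- Row-sum bound for a product: if all row sums of the
nonnegative matrix `A` are at most `l^(m−h)`, `A_{s,s₁} ≥ σ^(m−h)`, all row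
sums of the nonnegative matrix `B` are at most `l^h`, and the `s₁`-th row sum
of `B` is at most `l^h − σ^h`, then `Λ_s[A*B] ≤ l^m − σ^m`
(for `0 < σ ≤ 1 ≤ l` and positive integers `h ≤ m`). -/
theorem rowSum_prod_bound {k : ℕ}
    (σ l : ℝ) (hσ0 : 0 < σ) (hσ1 : σ ≤ 1) (hl : 1 ≤ l)
    (h m : ℕ) (hh : 0 < h) (hhm : h ≤ m)
    (A B : Matrix (Fin k) (Fin k) ℝ) (s s₁ : Fin k)
    (hAnn : ∀ i j, 0 ≤ A i j) (hBnn : ∀ i j, 0 ≤ B i j)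
    (hArows : ∀ i, ∑ j, A i j ≤ l ^ (m - h))
    (hAss1 : σ ^ (m - h) ≤ A s s₁)
    (hBrows : ∀ j, ∑ j', B j j' ≤ l ^ h)
    (hBs1 : ∑ j', B s₁ j' ≤ l ^ h - σ ^ h) :
    ∑ j, (A * B) s j ≤ l ^ m - σ ^ m := by
  have hlh : (0:ℝ) ≤ l ^ h := le_of_lt (pow_pos (lt_of_lt_of_le one_pos hl) h)
  have key : ∑ j, (A * B) s j = ∑ j', A s j' * ∑ j, B j' j := by
    simp only [Matrix.mul_apply, Finset.mul_sum]
    rw [Finset.sum_comm]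
  rw [key]
  rw [← Finset.add_sum_erase _ _ (Finset.mem_univ s₁)]
  have h1 : A s s₁ * ∑ j, B s₁ j ≤ A s s₁ * (l ^ h - σ ^ h) :=
    mul_le_mul_of_nonneg_left hBs1 (hAnn s s₁)
  have h2 : ∑ j' ∈ Finset.univ.erase s₁, A s j' * ∑ j, B j' j ≤
      (∑ j' ∈ Finset.univ.erase s₁, A s j') * l ^ h := by
    rw [Finset.sum_mul]
    refine Finset.sum_le_sum fun j' _ => mul_le_mul_of_nonneg_left (hBrows j') (hAnn s j')
  calc A s s₁ * ∑ j, B s₁ j + ∑ j' ∈ Finset.univ.erase s₁, A s j' * ∑ j, B j' j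
      ≤ A s s₁ * (l ^ h - σ ^ h) + (∑ j' ∈ Finset.univ.erase s₁, A s j') * l ^ h :=
        add_le_add h1 h2
    _ = (∑ j', A s j') * l ^ h - A s s₁ * σ ^ h := by
        rw [← Finset.add_sum_erase _ _ (Finset.mem_univ s₁)]
        ring
    _ ≤ l ^ (m - h) * l ^ h - σ ^ (m - h) * σ ^ h := by
        have hσh : (0:ℝ) ≤ σ ^ h := le_of_lt (pow_pos hσ0 h)
        gcongr
        exact hArows s
    _ = l ^ m - σ ^ m := by
        rw [← pow_add, ← pow_add, Nat.sub_add_cancel hhm]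
end

section
/- Let σ ∈ (0,1], l ≥ 1, and h ≥ 1, l₁ ∈ {0,...,h−1} be integers. Let A, B, C be nonnegative matrices where: every row sum of A is at most l^{l₁}; B has row s₁ with sum at most l − σ; every row sum of B is at most l; and C has all row sums at most l^{h−l₁−1} with diagonal entry C_{s₁s₁} ≥ σ^{h−l₁−1}. Then the s₁-th row sum of the product C·B·A is at most l^h − σ^h. -/
/-- With `σ ∈ (0,1]`, `l ≥ 1`, integers `h ≥ 1` and
`l₁ ∈ {0,…,h−1}`, and nonnegative matrices `A`, `B`, `C` such that all row
sums of `A` are ≤ `l^l₁`, the `s₁`-th row sum of `B` is ≤ `l − σ`, all row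
sums of `B` are ≤ `l`, all row sums of `C` are ≤ `l^(h−l₁−1)` and
`C_{s₁s₁} ≥ σ^(h−l₁−1)`, the `s₁`-th row sum of `C*B*A` is at most
`l^h − σ^h`. -/
theorem rowSum_triple_prod_bound {k : ℕ}
    (σ l : ℝ) (hσ0 : 0 < σ) (hσ1 : σ ≤ 1) (hl : 1 ≤ l)
    (h l₁ : ℕ) (hh : 1 ≤ h) (hl₁ : l₁ < h)
    (A B C : Matrix (Fin k) (Fin k) ℝ) (s₁ : Fin k)
    (hAnn : ∀ i j, 0 ≤ A i j) (hBnn : ∀ i j, 0 ≤ B i j)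
    (hCnn : ∀ i j, 0 ≤ C i j)
    (hArows : ∀ i, ∑ j, A i j ≤ l ^ l₁)
    (hBs1 : ∑ j, B s₁ j ≤ l - σ)
    (hBrows : ∀ i, ∑ j, B i j ≤ l)
    (hCrows : ∀ i, ∑ j, C i j ≤ l ^ (h - l₁ - 1))
    (hCs1s1 : σ ^ (h - l₁ - 1) ≤ C s₁ s₁) :
    ∑ j, (C * B * A) s₁ j ≤ l ^ h - σ ^ h := by
  have hCBnn : ∀ m, 0 ≤ (C * B) s₁ m := by
    intro m
    simp only [Matrix.mul_apply]
    exact Finset.sum_nonneg fun i _ => mul_nonneg (hCnn _ _) (hBnn _ _)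
  have step1 : ∑ j, (C * B * A) s₁ j = ∑ m, (C * B) s₁ m * ∑ j, A m j := by
    simp only [Matrix.mul_apply]
    rw [Finset.sum_comm]
    simp [Finset.mul_sum]
  have step2 : ∑ m, (C * B) s₁ m = ∑ i, C s₁ i * ∑ m, B i m := by
    simp only [Matrix.mul_apply]
    rw [Finset.sum_comm]
    simp [Finset.mul_sum]
  have hbound1 : ∑ j, (C * B * A) s₁ j ≤ (∑ m, (C * B) s₁ m) * l ^ l₁ := by
    rw [step1, Finset.sum_mul]
    exact Finset.sum_le_sum fun m _ => mul_le_mul_of_nonneg_left (hArows m) (hCBnn m)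
  -- bound the middle sum
  have hsplit : ∑ i, C s₁ i * ∑ m, B i m =
      C s₁ s₁ * (∑ m, B s₁ m) + ∑ i ∈ Finset.univ.erase s₁, C s₁ i * ∑ m, B i m := by
    rw [← Finset.add_sum_erase _ _ (Finset.mem_univ s₁)]
  have hCerase : ∑ i ∈ Finset.univ.erase s₁, C s₁ i = (∑ i, C s₁ i) - C s₁ s₁ := by
    rw [← Finset.add_sum_erase _ _ (Finset.mem_univ s₁)]; ring
  have hmid : ∑ i, C s₁ i * ∑ m, B i m ≤
      C s₁ s₁ * (l - σ) + ((∑ i, C s₁ i) - C s₁ s₁) * l := by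
    have h1 : C s₁ s₁ * (∑ m, B s₁ m) ≤ C s₁ s₁ * (l - σ) :=
      mul_le_mul_of_nonneg_left hBs1 (hCnn _ _)
    have h2 : ∑ i ∈ Finset.univ.erase s₁, C s₁ i * ∑ m, B i m ≤
        ((∑ i, C s₁ i) - C s₁ s₁) * l := by
      rw [← hCerase, Finset.sum_mul]
      exact Finset.sum_le_sum fun i _ =>
        mul_le_mul_of_nonneg_left (hBrows i) (hCnn _ _)
    rw [hsplit]; linarith
  have hCrow : (∑ i, C s₁ i) ≤ l ^ (h - l₁ - 1) := hCrows s₁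
  have hl0 : (0:ℝ) < l := lt_of_lt_of_le one_pos hl
  have hpowσ : σ ^ l₁ * σ ^ (h - l₁ - 1) * σ = σ ^ h := by
    rw [mul_assoc, ← pow_succ, ← pow_add]
    congr 1
    omega
  have hpowl : l ^ l₁ * l ^ (h - l₁ - 1) * l = l ^ h := by
    rw [mul_assoc, ← pow_succ, ← pow_add]
    congr 1
    omega
  have hσl : σ ^ l₁ ≤ l ^ l₁ := pow_le_pow_left₀ hσ0.le (hσ1.trans hl) l₁
  have hCnnrow : 0 ≤ ∑ i, C s₁ i := Finset.sum_nonneg fun i _ => hCnn _ _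
  have hxs : (0:ℝ) < σ ^ (h - l₁ - 1) := pow_pos hσ0 _
  have hfinal : (C s₁ s₁ * (l - σ) + ((∑ i, C s₁ i) - C s₁ s₁) * l) * l ^ l₁ ≤
      l ^ h - σ ^ h := by
    have hlpos : (0:ℝ) < l ^ l₁ := pow_pos hl0 _
    nlinarith [mul_le_mul_of_nonneg_right hCrow hl0.le,
      mul_le_mul_of_nonneg_right hCs1s1 hσ0.le,
      mul_le_mul_of_nonneg_right hσl (mul_pos hxs hσ0).le,
      pow_pos hσ0 l₁]
  calc ∑ j, (C * B * A) s₁ j ≤ (∑ m, (C * B) s₁ m) * l ^ l₁ := hbound1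
    _ = (∑ i, C s₁ i * ∑ m, B i m) * l ^ l₁ := by rw [step2]
    _ ≤ (C s₁ s₁ * (l - σ) + ((∑ i, C s₁ i) - C s₁ s₁) * l) * l ^ l₁ := by
        exact mul_le_mul_of_nonneg_right hmid (pow_pos hl0 _).le
    _ ≤ l ^ h - σ ^ h := hfinal
end

section
/- Let (m*(t)) be defined recursively by m*(t) = Φ(t)·m*(t−1) + w(t) with m*(−1) = 0, where each [Φ(t) w(t); 0 I_k] is a row-stochastic matrix (Φ(t) nonnegative (n−k)×(n−k), w(t) nonnegative (n−k)×k). Then every partial m*(t) has all row sums at most 1, and if Φ(t)···Φ(0) → 0 then the row sums of m*(t) converge to 1, i.e., the limit m* = lim m*(t) is row-stochastic. -/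
open Filter Topology

/-- Left partial products: `lprod Φ t = Φ(t−1) ⋯ Φ(1) Φ(0)` (and `lprod Φ 0 = I`). -/
def lprod {a : ℕ} (Φ : ℕ → Matrix (Fin a) (Fin a) ℝ) : ℕ → Matrix (Fin a) (Fin a) ℝ
  | 0 => 1
  | t + 1 => Φ t * lprod Φ t

/-- The accumulated input-to-state map `m*(t) = Φ(t)·m*(t−1) + w(t)`,
with `m*(−1) = 0` (so `m*(0) = w(0)`). -/
def mstar {a k : ℕ} (Φ : ℕ → Matrix (Fin a) (Fin a) ℝ)
    (w : ℕ → Matrix (Fin a) (Fin k) ℝ) : ℕ → Matrix (Fin a) (Fin k) ℝ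
  | 0 => w 0
  | t + 1 => Φ (t + 1) * mstar Φ w t + w (t + 1)

lemma lprod_nn {a : ℕ} (Φ : ℕ → Matrix (Fin a) (Fin a) ℝ)
    (hΦnn : ∀ t, ∀ i j, 0 ≤ Φ t i j) : ∀ t i j, 0 ≤ lprod Φ t i j := by
  intro t
  induction t with
  | zero => intro i j; simp [lprod, Matrix.one_apply]; positivity
  | succ t ih =>
    intro i j
    simp only [lprod, Matrix.mul_apply]
    exact Finset.sum_nonneg fun l _ => mul_nonneg (hΦnn t i l) (ih l j)

lemma key {a k : ℕ}
    (Φ : ℕ → Matrix (Fin a) (Fin a) ℝ) (w : ℕ → Matrix (Fin a) (Fin k) ℝ)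
    (hrow : ∀ t, ∀ i, (∑ j, Φ t i j) + (∑ j, w t i j) = 1) :
    ∀ t i, (∑ j, mstar Φ w t i j) + (∑ j, lprod Φ (t+1) i j) = 1 := by
  intro t
  induction t with
  | zero =>
    intro i
    simp only [mstar, lprod, Matrix.mul_one]
    rw [add_comm]; exact hrow 0 i
  | succ t ih =>
    intro i
    have h1 : ∑ j, mstar Φ w (t+1) i j
        = (∑ l, Φ (t+1) i l * ∑ j, mstar Φ w t l j) + ∑ j, w (t+1) i j := by
      simp only [mstar, Matrix.add_apply, Matrix.mul_apply, Finset.sum_add_distrib,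
        Finset.mul_sum]
      rw [Finset.sum_comm]
    have h2 : ∑ j, lprod Φ (t+2) i j
        = ∑ l, Φ (t+1) i l * ∑ j, lprod Φ (t+1) l j := by
      show ∑ j, lprod Φ (t+1+1) i j = _
      simp only [lprod, Matrix.mul_apply, Finset.mul_sum]
      rw [Finset.sum_comm]
    rw [h1, h2]
    have : (∑ l, Φ (t+1) i l * ∑ j, mstar Φ w t l j)
        + (∑ l, Φ (t+1) i l * ∑ j, lprod Φ (t+1) l j) = ∑ l, Φ (t+1) i l := by
      rw [← Finset.sum_add_distrib]
      congr 1; ext l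
      rw [← mul_add, ih l, mul_one]
    linarith [hrow (t+1) i, this]

/-- If each block matrix `[[Φ(t), w(t)], [0, I]]` is
row-stochastic (nonnegative blocks with `Λ_i[Φ(t)] + Λ_i[w(t)] = 1`), then
every `m*(t)` has all row sums at most 1, and if `Φ(t)⋯Φ(0) → 0`, then all
row sums of `m*(t)` converge to 1, i.e. the limit is row-stochastic. -/
theorem mstar_row_sums {a k : ℕ}
    (Φ : ℕ → Matrix (Fin a) (Fin a) ℝ) (w : ℕ → Matrix (Fin a) (Fin k) ℝ)
    (hΦnn : ∀ t, ∀ i j, 0 ≤ Φ t i j) (hwnn : ∀ t, ∀ i j, 0 ≤ w t i j)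
    (hrow : ∀ t, ∀ i, (∑ j, Φ t i j) + (∑ j, w t i j) = 1) :
    (∀ t, ∀ i, ∑ j, mstar Φ w t i j ≤ 1) ∧
    ((∀ i j, Tendsto (fun t => lprod Φ t i j) atTop (𝓝 0)) →
      ∀ i, Tendsto (fun t => ∑ j, mstar Φ w t i j) atTop (𝓝 1)) := by
  have hnn := lprod_nn Φ hΦnn
  have hk := key Φ w hrow
  constructor
  · intro t i
    have h := hk t i
    have h2 : 0 ≤ ∑ j, lprod Φ (t+1) i j :=
      Finset.sum_nonneg fun j _ => hnn (t+1) i j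
    linarith
  · intro hlim i
    have h1 : Tendsto (fun t => ∑ j, lprod Φ t i j) atTop (𝓝 0) := by
      have := tendsto_finset_sum (Finset.univ : Finset (Fin a))
        (fun j _ => hlim i j)
      simpa using this
    have h2 : Tendsto (fun t => ∑ j, lprod Φ (t+1) i j) atTop (𝓝 0) :=
      h1.comp (tendsto_add_atTop_nat 1)
    have h3 : (fun t => ∑ j, mstar Φ w t i j)
        = fun t => 1 - ∑ j, lprod Φ (t+1) i j := by
      funext t; have := hk t i; linarith
    rw [h3]
    simpa using (tendsto_const_nhds (x := (1:ℝ)) (f := atTop)).sub h2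
end
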